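/- Let S be any set of satisfiable formulas with exactly m clauses, at most n variables, and k literals per clause, and let p_γ ∈ [0,1]. If Pr_{(φ,a) ∼ D_pa(m,n,k)}[φ ∈ S] ≤ p_γ, then Pr_{φ ∼ D_R(m,n,k)}[φ ∈ S] ≤ p_γ · 2^n · e^{−m/2^k}. -/

import Mathlib

open scoped Classical
open Finset

/-- An assignment of `n` Boolean variables. -/
abbrev Assignment (n : ℕ) := Fin n → Bool

/-- A clause: an ordered `k`-tuple of literals, each a variable index together with a sign. -/
abbrev Clause (n k : ℕ) := Fin k → Fin n × Bool

/-- A formula: an ordered `m`-tuple of clauses. -/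
abbrev Formula (n k m : ℕ) := Fin m → Clause n k

/-- An assignment satisfies a clause if it satisfies at least one literal of the clause. -/
def SatClause {n k : ℕ} (v : Assignment n) (c : Clause n k) : Prop :=
  ∃ i, v (c i).1 = (c i).2

/-- An assignment satisfies a formula if it satisfies every clause. -/
def SatFormula {n k m : ℕ} (v : Assignment n) (φ : Formula n k m) : Prop :=
  ∀ j, SatClause v (φ j)

/-- The number of clauses of `φ` satisfied by `v`. -/
noncomputable def numSat {n k m : ℕ} (φ : Formula n k m) (v : Assignment n) : ℕ :=
  (Finset.univ.filter fun j => SatClause v (φ j)).card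

/-- The number of clauses of `φ` left unsatisfied by `v`. -/
noncomputable def numUnsat {n k m : ℕ} (φ : Formula n k m) (v : Assignment n) : ℕ :=
  (Finset.univ.filter fun j => ¬ SatClause v (φ j)).card

lemma card_unsat_lits {n : ℕ} (a : Assignment n) :
    Fintype.card {l : Fin n × Bool // ¬ (a l.1 = l.2)} = n := by
  have e : {l : Fin n × Bool // ¬ (a l.1 = l.2)} ≃ Fin n :=
    { toFun := fun l => l.1.1
      invFun := fun i => ⟨(i, !a i), by simp⟩
      left_inv := by
        rintro ⟨⟨i, b⟩, h⟩
        apply Subtype.ext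
        simp only [Prod.mk.injEq]
        exact ⟨trivial, by cases b <;> simp_all⟩
      right_inv := fun i => rfl }
  rw [Fintype.card_congr e, Fintype.card_fin]

lemma card_unsat_clauses {n k : ℕ} (a : Assignment n) :
    (univ.filter fun c : Clause n k => ¬ SatClause a c).card = n ^ k := by
  rw [← Fintype.card_subtype]
  have e : {c : Clause n k // ¬ SatClause a c} ≃
      (Fin k → {l : Fin n × Bool // ¬ (a l.1 = l.2)}) := by
    refine Equiv.trans (Equiv.subtypeEquivRight ?_)
      (Equiv.subtypePiEquivPi (p := fun _ (l : Fin n × Bool) => ¬ (a l.1 = l.2)))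
    intro c
    simp [SatClause]
  rw [Fintype.card_congr e, Fintype.card_fun, card_unsat_lits, Fintype.card_fin]

lemma card_clauses (n k : ℕ) : Fintype.card (Clause n k) = (2 * n) ^ k := by
  simp [Fintype.card_fun, mul_comm]

lemma card_sat_clauses {n k : ℕ} (a : Assignment n) :
    (univ.filter fun c : Clause n k => SatClause a c).card = (2 * n) ^ k - n ^ k := by
  have h := Finset.card_filter_add_card_filter_not
    (s := (univ : Finset (Clause n k))) (p := fun c => SatClause a c)
  rw [card_unsat_clauses, Finset.card_univ, card_clauses] at h
  omega

lemma card_sat_formulas {n k m : ℕ} (a : Assignment n) :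
    (univ.filter fun φ : Formula n k m => SatFormula a φ).card = ((2 * n) ^ k - n ^ k) ^ m := by
  rw [← Fintype.card_subtype]
  have e : {φ : Formula n k m // SatFormula a φ} ≃
      (Fin m → {c : Clause n k // SatClause a c}) := by
    refine Equiv.trans (Equiv.subtypeEquivRight ?_)
      (Equiv.subtypePiEquivPi (p := fun _ (c : Clause n k) => SatClause a c))
    intro φ
    rfl
  rw [Fintype.card_congr e, Fintype.card_fun, Fintype.card_subtype, card_sat_clauses,
    Fintype.card_fin]

lemma card_sat_pairs (n k m : ℕ) :
    ((univ : Finset (Formula n k m × Assignment n)).filter fun p =>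
        SatFormula p.2 p.1).card = 2 ^ n * ((2 * n) ^ k - n ^ k) ^ m := by
  rw [← Fintype.card_subtype]
  have e : {p : Formula n k m × Assignment n // SatFormula p.2 p.1} ≃
      (a : Assignment n) × {φ : Formula n k m // SatFormula a φ} :=
    { toFun := fun p => ⟨p.1.2, ⟨p.1.1, p.2⟩⟩
      invFun := fun q => ⟨(q.2.1, q.1), q.2.2⟩
      left_inv := fun ⟨⟨φ, a⟩, h⟩ => rfl
      right_inv := fun ⟨a, φ, h⟩ => rfl }
  rw [Fintype.card_congr e, Fintype.card_sigma]
  simp only [Fintype.card_subtype, card_sat_formulas]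
  simp [Fintype.card_fun]

lemma card_S_le {n k m : ℕ} (S : Finset (Formula n k m))
    (hsat : ∀ φ ∈ S, ∃ a : Assignment n, SatFormula a φ) :
    S.card ≤ ((univ : Finset (Formula n k m × Assignment n)).filter fun p =>
        SatFormula p.2 p.1 ∧ p.1 ∈ S).card := by
  classical
  apply Finset.card_le_card_of_injOn
    (fun φ => (φ, if h : φ ∈ S then Classical.choose (hsat φ h) else fun _ => true))
  · intro φ hφ
    simp only [Finset.mem_coe, Finset.mem_filter, Finset.mem_univ, true_and, dif_pos hφ]
    exact ⟨by rw [dif_pos (Finset.mem_coe.mp hφ)]; exact Classical.choose_spec (hsat φ hφ), hφ⟩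
  · intro φ₁ _ φ₂ _ h
    exact congrArg Prod.fst h


/-- Let `S` be any set of satisfiable formulas with `m` clauses and
`p_γ ∈ [0,1]`.  If, for `(φ,a)` drawn uniformly among pairs of a formula with `m` clauses and
a satisfying assignment, `Pr[φ ∈ S] ≤ p_γ`, then for `φ` drawn uniformly among all formulas
with `m` clauses, `Pr[φ ∈ S] ≤ p_γ·2^n·e^{−m/2^k}`. -/
theorem planted_to_random (n k m : ℕ) (hn : 0 < n) (hk : 0 < k) (hm : 0 < m)
    (S : Finset (Formula n k m)) (hsat : ∀ φ ∈ S, ∃ a : Assignment n, SatFormula a φ)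
    (pγ : ℝ) (hpγ0 : 0 ≤ pγ) (hpγ1 : pγ ≤ 1)
    (hplanted :
      ((((univ : Finset (Formula n k m × Assignment n)).filter fun p =>
          SatFormula p.2 p.1 ∧ p.1 ∈ S).card : ℝ)
        / (((univ : Finset (Formula n k m × Assignment n)).filter fun p =>
          SatFormula p.2 p.1).card : ℝ)) ≤ pγ) :
    (S.card : ℝ) / (Fintype.card (Formula n k m) : ℝ)
      ≤ pγ * 2 ^ n * Real.exp (-(m : ℝ) / 2 ^ k) := by
  have hClt : n ^ k < (2 * n) ^ k := Nat.pow_lt_pow_left (by omega) hk.ne'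
  set C : ℕ := (2 * n) ^ k - n ^ k with hC
  have hCpos : 0 < C := by omega
  have hT := card_sat_pairs n k m
  set T : ℕ := ((univ : Finset (Formula n k m × Assignment n)).filter fun p =>
      SatFormula p.2 p.1).card with hTdef
  have hTpos : (0:ℝ) < (T:ℝ) := by
    rw [hT]; push_cast; positivity
  -- numerator bound
  have hA := card_S_le S hsat
  have hSle : (S.card : ℝ) ≤ pγ * T := by
    calc (S.card : ℝ) ≤
        (((univ : Finset (Formula n k m × Assignment n)).filter fun p =>
          SatFormula p.2 p.1 ∧ p.1 ∈ S).card : ℝ) := by exact_mod_cast hA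
      _ ≤ pγ * T := by
          rw [div_le_iff₀ hTpos] at hplanted; exact hplanted
  have hN : Fintype.card (Formula n k m) = ((2 * n) ^ k) ^ m := by
    rw [Fintype.card_fun, card_clauses, Fintype.card_fin]
  have hNpos : (0:ℝ) < (Fintype.card (Formula n k m) : ℝ) := by
    rw [hN]; push_cast; positivity
  rw [div_le_iff₀ hNpos]
  have h2k : (0:ℝ) < 2 ^ k := by positivity
  have hx0 : (0:ℝ) ≤ 1 - 1 / 2 ^ k := by
    rw [sub_nonneg, div_le_one h2k]
    exact one_le_pow₀ (by norm_num)
  have hxe : 1 - 1 / 2 ^ k ≤ Real.exp (-(1 / 2 ^ k)) := by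
    have := Real.add_one_le_exp (-(1 / 2 ^ k)); linarith
  have hpow : (1 - 1 / 2 ^ k) ^ m ≤ Real.exp (-(m : ℝ) / 2 ^ k) := by
    calc (1 - 1 / 2 ^ k) ^ m ≤ Real.exp (-(1 / 2 ^ k)) ^ m := pow_le_pow_left₀ hx0 hxe m
      _ = Real.exp ((m : ℕ) * -(1 / 2 ^ k)) := (Real.exp_nat_mul _ m).symm
      _ = Real.exp (-(m : ℝ) / 2 ^ k) := by ring_nf
  have hCeq : (C : ℝ) = (1 - 1 / 2 ^ k) * (((2 * n) ^ k : ℕ) : ℝ) := by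
    rw [hC, Nat.cast_sub hClt.le]
    push_cast
    rw [mul_pow]
    field_simp
  have hkey : (C : ℝ) ^ m ≤ Real.exp (-(m : ℝ) / 2 ^ k) * (Fintype.card (Formula n k m) : ℝ) := by
    rw [hCeq, mul_pow, hN]
    push_cast
    rw [← pow_mul, pow_mul]
    exact mul_le_mul_of_nonneg_right hpow (by positivity)
  calc (S.card : ℝ) ≤ pγ * T := hSle
    _ = pγ * 2 ^ n * (C : ℝ) ^ m := by rw [hT]; push_cast; ring
    _ ≤ pγ * 2 ^ n * (Real.exp (-(m : ℝ) / 2 ^ k) * (Fintype.card (Formula n k m) : ℝ)) :=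
        mul_le_mul_of_nonneg_left hkey (by positivity)
    _ = pγ * 2 ^ n * Real.exp (-(m : ℝ) / 2 ^ k) * (Fintype.card (Formula n k m) : ℝ) := by ring
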